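/- Let n ≥ 1 and let K : (0,∞) × ℝⁿ × ℝⁿ → ℝ be the Mehler kernel K(t,x,y) = π^{−n/2}(1 − e^{−2t})^{−n/2} · exp( −[ ((|x|² + |y|²)/2)(1 + e^{−2t}) − 2 e^{−t} x·y ] / (1 − e^{−2t}) ). Then for every t > 0 and x, y ∈ ℝⁿ, ∂K/∂t (t,x,y) = −(1/2) Σ_{i=1}^n ( −∂²K/∂x_i² (t,x,y) + (x_i² − 1)·K(t,x,y) ); i.e., K solves the heat equation ∂_t K = −L_x K for the harmonic oscillator L = (1/2) Σ_i (−∂²/∂x_i² + x_i² − 1). -/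

import Mathlib

open Real

/-- The Mehler kernel of the harmonic oscillator
`L = (1/2) ∑ i (-∂²/∂xᵢ² + xᵢ² - 1)` on `ℝⁿ`. -/
noncomputable def mehlerKernel (n : ℕ) (t : ℝ) (x y : Fin n → ℝ) : ℝ :=
  Real.pi ^ (-(n : ℝ) / 2) * (1 - Real.exp (-(2 * t))) ^ (-(n : ℝ) / 2) *
    Real.exp (-((((∑ i, x i ^ 2) + ∑ i, y i ^ 2) / 2) * (1 + Real.exp (-(2 * t)))
        - 2 * Real.exp (-t) * ∑ i, x i * y i) / (1 - Real.exp (-(2 * t))))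

lemma gauss_iteratedDeriv2 (c a b d v : ℝ) :
    iteratedDeriv 2 (fun u => c * Real.exp (a*u^2 + b*u + d)) v
      = c * Real.exp (a*v^2 + b*v + d) * ((2*a*v + b)^2 + 2*a) := by
  have hg : ∀ u : ℝ, HasDerivAt (fun u : ℝ => a*u^2 + b*u + d) (2*a*u + b) u := by
    intro u
    have h1 : HasDerivAt (fun u : ℝ => a*u^2) (a * (2*u^1)) u := by
      simpa using (hasDerivAt_pow 2 u).const_mul a
    have h2 : HasDerivAt (fun u : ℝ => b*u) (b*1) u := (hasDerivAt_id u).const_mul b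
    have := (h1.add h2).add_const d
    refine this.congr_deriv ?_
    ring
  have hf : ∀ u : ℝ, HasDerivAt (fun u => c * Real.exp (a*u^2+b*u+d))
      (c * Real.exp (a*u^2+b*u+d) * (2*a*u+b)) u := by
    intro u
    have := ((hg u).exp).const_mul c
    refine this.congr_deriv ?_
    ring
  have hderiv1 : deriv (fun u => c * Real.exp (a*u^2+b*u+d))
      = fun u => c * Real.exp (a*u^2+b*u+d) * (2*a*u+b) := by
    funext u; exact (hf u).deriv
  rw [iteratedDeriv_succ, iteratedDeriv_one, hderiv1]
  have h2 : HasDerivAt (fun u => c * Real.exp (a*u^2+b*u+d) * (2*a*u+b))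
      (c * Real.exp (a*v^2+b*v+d) * ((2*a*v+b)^2 + 2*a)) v := by
    have hl : HasDerivAt (fun u : ℝ => 2*a*u + b) (2*a) v := by
      simpa using ((hasDerivAt_id v).const_mul (2*a)).add_const b
    have := (hf v).mul hl
    refine this.congr_deriv ?_
    ring
  exact h2.deriv

lemma sum_update_eq {n : ℕ} (x : Fin n → ℝ) (i : Fin n) (u : ℝ) (f : Fin n → ℝ → ℝ) :
    ∑ j, f j (Function.update x i u j) = f i u + ((∑ j, f j (x j)) - f i (x i)) := by
  classical
  have h : (fun j => f j (Function.update x i u j))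
      = Function.update (fun j => f j (x j)) i (f i u) := by
    funext j
    by_cases h : j = i
    · subst h; simp
    · simp [Function.update_of_ne h]
  rw [h, Finset.sum_update_of_mem (Finset.mem_univ i),
    Finset.sum_sdiff_eq_sub (Finset.subset_univ {i}), Finset.sum_singleton]

theorem mehlerKernel_heat_equation (n : ℕ) (hn : 1 ≤ n)
    (t : ℝ) (ht : 0 < t) (x y : Fin n → ℝ) :
    deriv (fun τ => mehlerKernel n τ x y) t
      = -(1 / 2) * ∑ i,
          (-(iteratedDeriv 2 (fun u => mehlerKernel n t (Function.update x i u) y) (x i))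
            + (x i ^ 2 - 1) * mehlerKernel n t x y) := by
  have hπ := Real.pi_pos
  have hs0 : 0 < Real.exp (-t) := Real.exp_pos _
  have hs1 : Real.exp (-t) < 1 := Real.exp_lt_one_iff.2 (by linarith)
  have hq : Real.exp (-(2*t)) = Real.exp (-t)^2 := by
    rw [show -(2*t) = -t + -t by ring, Real.exp_add, sq]
  have hD : 0 < 1 - Real.exp (-t)^2 := by nlinarith
  have hDne : (1 : ℝ) - Real.exp (-t)^2 ≠ 0 := ne_of_gt hD
  -- rewriting the sliced function in one variable
  have hupdate : ∀ i : Fin n,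
      (fun u => mehlerKernel n t (Function.update x i u) y)
        = fun u => (Real.pi ^ (-(n:ℝ)/2) * (1 - Real.exp (-t)^2) ^ (-(n:ℝ)/2)) *
            Real.exp ((-(1 + Real.exp (-t)^2)/(2*(1 - Real.exp (-t)^2))) * u^2
              + (2*Real.exp (-t)*(y i)/(1 - Real.exp (-t)^2)) * u
              + (-(((((∑ j, x j ^ 2) - x i ^ 2) + ∑ j, y j ^ 2)/2) * (1 + Real.exp (-t)^2)
                  - 2*Real.exp (-t)*((∑ j, x j * y j) - x i * y i))
                / (1 - Real.exp (-t)^2))) := by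
    intro i
    funext u
    have h1 : ∑ j, Function.update x i u j ^ 2 = u^2 + ((∑ j, x j ^ 2) - x i ^ 2) :=
      sum_update_eq x i u (fun _ v => v^2)
    have h2 : ∑ j, Function.update x i u j * y j
        = u * y i + ((∑ j, x j * y j) - x i * y i) :=
      sum_update_eq x i u (fun j v => v * y j)
    simp only [mehlerKernel, h1, h2, hq]
    congr 1
    field_simp
    ring
  -- value of the kernel itself
  have hM : mehlerKernel n t x y
      = (Real.pi ^ (-(n:ℝ)/2) * (1 - Real.exp (-t)^2) ^ (-(n:ℝ)/2)) *
          Real.exp (-((((∑ j, x j ^ 2) + ∑ j, y j ^ 2)/2) * (1 + Real.exp (-t)^2)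
              - 2*Real.exp (-t) * ∑ j, x j * y j) / (1 - Real.exp (-t)^2)) := by
    simp only [mehlerKernel, hq, mul_assoc]
  -- second derivative in each slot
  have hiter : ∀ i : Fin n,
      iteratedDeriv 2 (fun u => mehlerKernel n t (Function.update x i u) y) (x i)
        = mehlerKernel n t x y *
            ((2*(-(1 + Real.exp (-t)^2)/(2*(1 - Real.exp (-t)^2)))*(x i)
                + 2*Real.exp (-t)*(y i)/(1 - Real.exp (-t)^2))^2
              + 2*(-(1 + Real.exp (-t)^2)/(2*(1 - Real.exp (-t)^2)))) := by
    intro i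
    have h0 := congrFun (hupdate i) (x i)
    rw [Function.update_eq_self] at h0
    rw [hupdate i, gauss_iteratedDeriv2, ← h0]
  -- time derivative
  have hq' : HasDerivAt (fun τ : ℝ => Real.exp (-(2*τ))) (-2 * Real.exp (-(2*t))) t := by
    have h1 : HasDerivAt (fun τ : ℝ => -(2*τ)) (-2) t := by
      exact ((hasDerivAt_id t).const_mul (2:ℝ)).neg.congr_deriv (by ring)
    simpa [mul_comm] using h1.exp
  have hDt : HasDerivAt (fun τ : ℝ => 1 - Real.exp (-(2*τ))) (2 * Real.exp (-(2*t))) t := by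
    have := hq'.const_sub 1
    refine this.congr_deriv ?_
    ring
  have hr' : HasDerivAt (fun τ : ℝ => Real.exp (-τ)) (-Real.exp (-t)) t := by
    have h1 : HasDerivAt (fun τ : ℝ => -τ) (-1) t := (hasDerivAt_id t).neg
    simpa [mul_comm] using h1.exp
  have hDne' : (1 : ℝ) - Real.exp (-(2*t)) ≠ 0 := by rw [hq]; exact hDne
  have hC : HasDerivAt (fun τ : ℝ => (1 - Real.exp (-(2*τ))) ^ (-(n:ℝ)/2))
      (2 * Real.exp (-(2*t)) * (-(n:ℝ)/2) * (1 - Real.exp (-(2*t))) ^ ((-(n:ℝ)/2) - 1)) t :=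
    hDt.rpow_const (Or.inl hDne')
  have hN : HasDerivAt (fun τ : ℝ =>
      (((∑ i, x i ^ 2) + ∑ i, y i ^ 2) / 2) * (1 + Real.exp (-(2*τ)))
        - 2 * Real.exp (-τ) * ∑ i, x i * y i)
      ((((∑ i, x i ^ 2) + ∑ i, y i ^ 2) / 2) * (-2 * Real.exp (-(2*t)))
        - 2 * (-Real.exp (-t)) * ∑ i, x i * y i) t := by
    have h1 := (hq'.const_add 1).const_mul (((∑ i, x i ^ 2) + ∑ i, y i ^ 2) / 2)
    have h2 := (hr'.const_mul 2).mul_const (∑ i, x i * y i)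
    exact h1.sub h2
  have hF := (hN.neg.div hDt hDne')
  have hK := (hC.const_mul (Real.pi ^ (-(n:ℝ)/2))).mul hF.exp
  have hfun : (fun τ => mehlerKernel n τ x y)
      = (fun τ : ℝ => Real.pi ^ (-(n:ℝ)/2) * (1 - Real.exp (-(2*τ))) ^ (-(n:ℝ)/2) *
          Real.exp (-((((∑ i, x i ^ 2) + ∑ i, y i ^ 2) / 2) * (1 + Real.exp (-(2*τ)))
            - 2 * Real.exp (-τ) * ∑ i, x i * y i) / (1 - Real.exp (-(2*τ))))) := rfl
  rw [hfun, (show HasDerivAt (fun τ : ℝ => Real.pi ^ (-(n:ℝ)/2) * (1 - Real.exp (-(2*τ))) ^ (-(n:ℝ)/2) *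
          Real.exp (-((((∑ i, x i ^ 2) + ∑ i, y i ^ 2) / 2) * (1 + Real.exp (-(2*τ)))
            - 2 * Real.exp (-τ) * ∑ i, x i * y i) / (1 - Real.exp (-(2*τ))))) _ t from hK).deriv]
  simp only [Pi.neg_apply, Pi.div_apply]
  simp only [hiter]
  rw [hq, Real.rpow_sub hD, Real.rpow_one, hM]
  have hterm : ∀ i ∈ Finset.univ, ∀ M : ℝ,
      (-(M * ((2*(-(1 + Real.exp (-t)^2)/(2*(1 - Real.exp (-t)^2)))*(x i)
                + 2*Real.exp (-t)*(y i)/(1 - Real.exp (-t)^2))^2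
              + 2*(-(1 + Real.exp (-t)^2)/(2*(1 - Real.exp (-t)^2)))))
        + (x i ^ 2 - 1) * M)
      = ((1 - (1 + Real.exp (-t)^2)^2/(1 - Real.exp (-t)^2)^2) * M) * x i ^ 2
        + ((4*Real.exp (-t)*(1 + Real.exp (-t)^2)/(1 - Real.exp (-t)^2)^2) * M) * (x i * y i)
        + ((-(4*Real.exp (-t)^2)/(1 - Real.exp (-t)^2)^2) * M) * y i ^ 2
        + ((1 + Real.exp (-t)^2)/(1 - Real.exp (-t)^2) - 1) * M := by
    intro i _ M
    field_simp
    ring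
  rw [Finset.sum_congr rfl (fun i hi => hterm i hi _)]
  simp only [Finset.sum_add_distrib, ← Finset.mul_sum, Finset.sum_const, Finset.card_univ,
    Fintype.card_fin, nsmul_eq_mul]
  field_simp
  ring
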